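/- Let k ≥ 2 and let n, r be positive integers with k·r < (k−1)·n. Let σ be a cyclic order on {1,…,n} and let 𝓕 be a k-wise intersecting family of σ-intervals of length r with |𝓕| = r. Then there exists an index x ∈ ℤ/nℤ such that 𝓕 is exactly the family of all σ-intervals of length r that contain the index x (equivalently, that contain the element σ(x)). -/

import Mathlib

/-- A family is `k`-wise intersecting: any `k` (not necessarily distinct) members
have a common element. -/
def KWiseIntersecting (k : ℕ) (𝓕 : Finset (Finset ℕ)) : Prop :=
  ∀ f : Fin k → Finset ℕ, (∀ i, f i ∈ 𝓕) → ∃ v, ∀ i, v ∈ f i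

/-- The `σ`-interval of length `r` beginning at index `x ∈ ℤ/nℤ`:
`{σ(x), σ(x+1), …, σ(x+r−1)}`. -/
def cInterval (n : ℕ) (σ : ZMod n → ℕ) (r : ℕ) (x : ZMod n) : Finset ℕ :=
  (Finset.range r).image fun j : ℕ => σ (x + (j : ZMod n))

lemma valSubAdd {n : ℕ} [NeZero n] (x y z : ZMod n)
    (h : (x - y).val + (y - z).val < n) :
    (x - z).val = (x - y).val + (y - z).val := by
  have hxz : x - z = (x - y) + (y - z) := by ring
  rw [hxz, ZMod.val_add_of_lt h]

lemma shiftSum (q : ℕ) (G : ℕ → ℕ) (hper : ∀ j, G (j + q) = G j) (t : ℕ) :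
    ∑ j ∈ Finset.range q, G (j + t) = ∑ j ∈ Finset.range q, G j := by
  induction t with
  | zero => simp
  | succ t ih =>
      have h1 : ∑ j ∈ Finset.range (q+1), G (j + t)
          = G t + ∑ j ∈ Finset.range q, G (j + 1 + t) := by
        rw [Finset.sum_range_succ']
        simp [add_comm, add_assoc, add_left_comm]
      have h2 : ∑ j ∈ Finset.range (q+1), G (j + t)
          = (∑ j ∈ Finset.range q, G (j + t)) + G (q + t) := by
        rw [Finset.sum_range_succ]
      have h3 : G (q + t) = G t := by rw [add_comm]; exact hper t
      have h4 : ∑ j ∈ Finset.range q, G (j + 1 + t) = ∑ j ∈ Finset.range q, G (j + t) := by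
        omega
      have h5 : ∑ j ∈ Finset.range q, G (j + (t + 1)) = ∑ j ∈ Finset.range q, G (j + 1 + t) := by
        apply Finset.sum_congr rfl
        intro j _
        ring_nf
      rw [h5, h4, ih]

lemma coreLemma {n r k L : ℕ} [NeZero n] (hr : 0 < r) (hk : 2 ≤ k)
    (hL : n = r + L) (hL1 : 1 ≤ L) (hβ : n + 1 ≤ k * L)
    (S : Finset (ZMod n)) (hcard : S.card = r)
    (hprop : ∀ f : Fin k → ZMod n, (∀ i, f i ∈ S) →
      ∃ p : ZMod n, ∀ i, (p - f i).val < r) :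
    ∃ x : ZMod n, ∀ y ∈ S, (x - y).val < r := by
  have hn : 0 < n := Nat.pos_of_ne_zero (NeZero.ne n)
  by_cases hA : ∃ s ∈ S, ∀ t ∈ S, t = s ∨ L + 1 ≤ (t - s).val
  · obtain ⟨s, hs, hall⟩ := hA
    refine ⟨s, fun y hy => ?_⟩
    rcases hall y hy with h | h
    · subst h; simp [ZMod.val_zero]; omega
    · have hne : y - s ≠ 0 := by
        intro h0
        rw [h0] at h
        simp [ZMod.val_zero] at h
      have : s - y = -(y - s) := by ring
      rw [this, ZMod.neg_val, if_neg hne]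
      have := ZMod.val_lt (y - s)
      omega
  · push_neg at hA
    exfalso
    -- hA : ∀ s ∈ S, ∃ t ∈ S, t ≠ s ∧ (t - s).val < L + 1
    have hSne : S.Nonempty := Finset.card_pos.mp (by omega)
    obtain ⟨s0, hs0⟩ := hSne
    -- total jump function with max property
    have htot : ∀ s : ZMod n, ∃ t : ZMod n, s ∈ S →
        t ∈ S ∧ 1 ≤ (t - s).val ∧ (t - s).val ≤ L ∧
        ∀ u ∈ S, 1 ≤ (u - s).val → (u - s).val ≤ L → (u - s).val ≤ (t - s).val := by
      intro s
      by_cases hs : s ∈ S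
      · obtain ⟨t0, ht0S, ht0ne, ht0L⟩ := hA s hs
        have ht01 : 1 ≤ (t0 - s).val := by
          rcases Nat.eq_zero_or_pos (t0 - s).val with h0 | h1
          · exact absurd (sub_eq_zero.mp ((ZMod.val_eq_zero _).mp h0)) ht0ne
          · exact h1
        set T := S.filter (fun t => 1 ≤ (t - s).val ∧ (t - s).val ≤ L) with hT
        have hTne : T.Nonempty := ⟨t0, Finset.mem_filter.mpr ⟨ht0S, ht01, by omega⟩⟩
        obtain ⟨t, htT, htmax⟩ := Finset.exists_max_image T (fun t => (t - s).val) hTne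
        rw [hT, Finset.mem_filter] at htT
        refine ⟨t, fun _ => ⟨htT.1, htT.2.1, htT.2.2, ?_⟩⟩
        intro u huS hu1 huL
        exact htmax u (Finset.mem_filter.mpr ⟨huS, hu1, huL⟩)
      · exact ⟨s, fun h => absurd h hs⟩
    choose F hF using htot
    have hFS : ∀ s ∈ S, F s ∈ S := fun s hs => (hF s hs).1
    have hF1 : ∀ s ∈ S, 1 ≤ (F s - s).val := fun s hs => (hF s hs).2.1
    have hFL : ∀ s ∈ S, (F s - s).val ≤ L := fun s hs => (hF s hs).2.2.1
    have hFmax : ∀ s ∈ S, ∀ u ∈ S, 1 ≤ (u - s).val → (u - s).val ≤ L →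
        (u - s).val ≤ (F s - s).val := fun s hs => (hF s hs).2.2.2
    -- the orbit
    set orb : ℕ → ZMod n := fun m => F^[m] s0 with horbdef
    have horbS : ∀ m, orb m ∈ S := by
      intro m
      induction m with
      | zero => simpa [horbdef] using hs0
      | succ m ih =>
          have : orb (m+1) = F (orb m) := by
            simp only [horbdef, Function.iterate_succ_apply']
          rw [this]; exact hFS _ ih
    have horbsucc : ∀ m, orb (m + 1) = F (orb m) := by
      intro m; simp only [horbdef, Function.iterate_succ_apply']
    -- pigeonhole for a repeat
    have hrep : ∃ b, ∃ a, a < b ∧ orb a = orb b := by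
      have hmaps : ∀ m ∈ Finset.range (r+1), orb m ∈ S := fun m _ => horbS m
      have hcards : S.card < (Finset.range (r+1)).card := by
        rw [Finset.card_range]; omega
      obtain ⟨x, -, y, -, hxy, hfeq⟩ :=
        Finset.exists_ne_map_eq_of_card_lt_of_maps_to hcards hmaps
      rcases lt_or_gt_of_ne hxy with h | h
      · exact ⟨y, x, h, hfeq⟩
      · exact ⟨x, y, h, hfeq.symm⟩
    set B := Nat.find hrep with hBdef
    obtain ⟨a, haB, haeq⟩ := Nat.find_spec hrep
    have hBmin : ∀ b < B, ¬ ∃ a, a < b ∧ orb a = orb b := fun b hb => Nat.find_min hrep hb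
    set q := B - a with hqdef
    have hq1 : 1 ≤ q := by omega
    -- the cycle
    set c : ℕ → ZMod n := fun m => orb (a + m % q) with hcdef
    have hcS : ∀ m, c m ∈ S := fun m => horbS _
    have hcper : ∀ m, c (m + q) = c m := by
      intro m; simp only [hcdef, Nat.add_mod_right]
    have hcsucc : ∀ m, c (m + 1) = F (c m) := by
      intro m
      have hmod : (m + 1) % q = (m % q + 1) % q := by
        conv_lhs => rw [← Nat.mod_add_mod]
      have hmq : m % q < q := Nat.mod_lt _ (by omega)
      rcases Nat.lt_or_ge (m % q + 1) q with h | h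
      · simp only [hcdef, hmod, Nat.mod_eq_of_lt h]
        rw [show a + (m % q + 1) = (a + m % q) + 1 by ring, horbsucc]
      · have hq : m % q + 1 = q := by omega
        simp only [hcdef, hmod, hq, Nat.mod_self]
        have h1 : orb (a + 0) = orb B := by rw [Nat.add_zero, haeq]
        have h2 : B = (a + (q - 1)) + 1 := by omega
        rw [h1, h2, horbsucc]
        congr 2
        omega
    have hcinj : ∀ i < q, ∀ j < q, c i = c j → i = j := by
      have key : ∀ i j, i < j → j < q → c i ≠ c j := by
        intro i j hij hjq hceq
        have h1 : c i = orb (a + i) := by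
          simp only [hcdef, Nat.mod_eq_of_lt (by omega : i < q)]
        have h2 : c j = orb (a + j) := by
          simp only [hcdef, Nat.mod_eq_of_lt hjq]
        exact hBmin (a + j) (by omega) ⟨a + i, by omega, by rw [← h1, ← h2, hceq]⟩
      intro i hi j hj hceq
      rcases lt_trichotomy i j with h | h | h
      · exact absurd hceq (key i j h hj)
      · exact h
      · exact absurd hceq.symm (key j i h hi)
    -- steps
    set d : ℕ → ℕ := fun m => (c (m + 1) - c m).val with hddef
    have hd1 : ∀ m, 1 ≤ d m := by
      intro m; rw [hddef]; simp only [hcsucc m]; exact hF1 _ (hcS m)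
    have hdL : ∀ m, d m ≤ L := by
      intro m; rw [hddef]; simp only [hcsucc m]; exact hFL _ (hcS m)
    have hdper : ∀ m, d (m + q) = d m := by
      intro m
      simp only [hddef]
      rw [show m + q + 1 = (m + 1) + q by ring, hcper, hcper]
    -- total distance is a positive multiple of n
    have hdvd : n ∣ ∑ j ∈ Finset.range q, d j := by
      rw [← ZMod.natCast_eq_zero_iff]
      push_cast
      have : ∀ j, ((d j : ℕ) : ZMod n) = c (j+1) - c j := by
        intro j; rw [hddef]; exact ZMod.natCast_zmod_val _
      rw [Finset.sum_congr rfl (fun j _ => this j), Finset.sum_range_sub (f := c)]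
      have : c q = c 0 := by
        simp only [hcdef, Nat.mod_self, Nat.zero_mod]
      rw [this]; ring
    have hsum_ge : q ≤ ∑ j ∈ Finset.range q, d j := by
      calc q = ∑ _j ∈ Finset.range q, 1 := by simp
      _ ≤ ∑ j ∈ Finset.range q, d j := Finset.sum_le_sum (fun j _ => hd1 j)
    set w := (∑ j ∈ Finset.range q, d j) / n with hwdef
    have hwn : ∑ j ∈ Finset.range q, d j = w * n := by
      rw [hwdef, Nat.div_mul_cancel hdvd]
    have hw1 : 1 ≤ w := by
      rcases Nat.eq_zero_or_pos w with h0 | h1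
      · rw [h0] at hwn; omega
      · exact h1
    -- r ≥ 2
    have hr2 : 2 ≤ r := by
      rw [← hcard]
      apply Finset.one_lt_card.mpr
      refine ⟨F s0, hFS _ hs0, s0, hs0, ?_⟩
      intro heq
      have := hF1 s0 hs0
      rw [heq] at this
      simp [ZMod.val_zero] at this
    -- gaps
    have herase : ∀ s ∈ S, (S.erase s).Nonempty := by
      intro s hs
      rw [← Finset.card_pos, Finset.card_erase_of_mem hs]
      omega
    set g : ZMod n → ℕ := fun s =>
      if h : ((S.erase s).image (fun t => (t - s).val)).Nonempty
      then ((S.erase s).image (fun t => (t - s).val)).min' h else 0 with hgdef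
    have hg_ex : ∀ s ∈ S, ∃ t ∈ S, t ≠ s ∧ (t - s).val = g s := by
      intro s hs
      have hne : ((S.erase s).image (fun t => (t - s).val)).Nonempty :=
        (herase s hs).image _
      have hmem := Finset.min'_mem _ hne
      rw [Finset.mem_image] at hmem
      obtain ⟨t, htE, hteq⟩ := hmem
      rw [Finset.mem_erase] at htE
      refine ⟨t, htE.2, htE.1, ?_⟩
      rw [hgdef]; simp only [dif_pos hne]; exact hteq
    have hg_min : ∀ s ∈ S, ∀ t ∈ S, t ≠ s → g s ≤ (t - s).val := by
      intro s hs t htS htne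
      have hne : ((S.erase s).image (fun t => (t - s).val)).Nonempty :=
        (herase s hs).image _
      rw [hgdef]; simp only [dif_pos hne]
      exact Finset.min'_le _ _ (Finset.mem_image_of_mem _
        (Finset.mem_erase.mpr ⟨htne, htS⟩))
    have hg1 : ∀ s ∈ S, 1 ≤ g s := by
      intro s hs
      obtain ⟨t, htS, htne, hteq⟩ := hg_ex s hs
      rcases Nat.eq_zero_or_pos (g s) with h0 | h1
      · rw [h0] at hteq
        exact absurd (sub_eq_zero.mp ((ZMod.val_eq_zero _).mp hteq)) htne
      · exact h1
    have hgn : ∀ s ∈ S, g s ≤ n - 1 := by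
      intro s hs
      obtain ⟨t, htS, htne, hteq⟩ := hg_ex s hs
      have := ZMod.val_lt (t - s)
      omega
    -- gap intervals are disjoint, so gaps sum to at most n
    set I : ZMod n → Finset (ZMod n) := fun s =>
      (Finset.range (g s)).image (fun u => s + ((u + 1 : ℕ) : ZMod n)) with hIdef
    have hIcard : ∀ s ∈ S, (I s).card = g s := by
      intro s hs
      rw [hIdef]
      rw [Finset.card_image_of_injOn, Finset.card_range]
      intro u hu u' hu' heq
      rw [Finset.mem_coe, Finset.mem_range] at hu hu'
      have hgs := hgn s hs
      have h1 : ((u + 1 : ℕ) : ZMod n) = ((u' + 1 : ℕ) : ZMod n) := by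
        exact add_left_cancel heq
      have h2 := congrArg ZMod.val h1
      rw [ZMod.val_cast_of_lt (by omega), ZMod.val_cast_of_lt (by omega)] at h2
      omega
    have hIdisj : ∀ s ∈ S, ∀ s' ∈ S, s ≠ s' → Disjoint (I s) (I s') := by
      intro s hs s' hs' hne
      rw [Finset.disjoint_left]
      intro x hx hx'
      rw [hIdef, Finset.mem_image] at hx hx'
      obtain ⟨u, hu, hux⟩ := hx
      obtain ⟨u', hu', hux'⟩ := hx'
      rw [Finset.mem_range] at hu hu'
      have heq : s + ((u + 1 : ℕ) : ZMod n) = s' + ((u' + 1 : ℕ) : ZMod n) := by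
        rw [hux, hux']
      have hgs := hgn s hs
      have hgs' := hgn s' hs'
      rcases lt_trichotomy u u' with h | h | h
      · -- u < u' : contradiction with minimality of g s'
        have hsub : s - s' = ((u' - u : ℕ) : ZMod n) := by
          push_cast [Nat.cast_sub h.le]
          push_cast at heq
          linear_combination heq
        have hval : (s - s').val = u' - u := by
          rw [hsub, ZMod.val_cast_of_lt (by omega)]
        have := hg_min s' hs' s hs hne
        omega
      · -- u = u' : s = s'
        subst h
        exact hne (by exact add_right_cancel heq)
      · -- u' < u : contradiction with minimality of g s
        have hsub : s' - s = ((u - u' : ℕ) : ZMod n) := by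
          push_cast [Nat.cast_sub h.le]
          push_cast at heq
          linear_combination - heq
        have hval : (s' - s).val = u - u' := by
          rw [hsub, ZMod.val_cast_of_lt (by omega)]
        have := hg_min s hs s' hs' hne.symm
        omega
    have hgsum : ∑ s ∈ S, g s ≤ n := by
      have h1 : ∑ s ∈ S, g s = ∑ s ∈ S, (I s).card :=
        Finset.sum_congr rfl (fun s hs => (hIcard s hs).symm)
      have h2 : (S.biUnion I).card = ∑ s ∈ S, (I s).card :=
        Finset.card_biUnion hIdisj
      have h3 : (S.biUnion I).card ≤ Fintype.card (ZMod n) := Finset.card_le_univ _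
      rw [ZMod.card] at h3
      omega
    -- maximality per step
    have hstep : ∀ m, L + 1 ≤ d m + g (c (m + 1)) := by
      intro m
      by_contra hlt
      push_neg at hlt
      obtain ⟨t, htS, htne, hteq⟩ := hg_ex (c (m+1)) (hcS (m+1))
      have hsumlt : (t - c (m+1)).val + (c (m+1) - c m).val < n := by
        rw [hteq]
        have : d m = (c (m+1) - c m).val := rfl
        omega
      have hval : (t - c m).val = g (c (m+1)) + d m := by
        rw [valSubAdd t (c (m+1)) (c m) hsumlt, hteq]
      have hgm1 := hg1 (c (m+1)) (hcS (m+1))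
      have hmax := hFmax (c m) (hcS m) t htS (by omega) (by omega)
      have hFcm : (F (c m) - c m).val = d m := by rw [← hcsucc m]
      rw [hFcm, hval] at hmax
      omega
    -- the cycle inequality : q*L + r ≤ w*n + n
    set Cs := (Finset.range q).image c with hCsdef
    have hCcard : Cs.card = q := by
      rw [hCsdef, Finset.card_image_of_injOn, Finset.card_range]
      intro i hi j hj
      rw [Finset.mem_coe, Finset.mem_range] at hi hj
      exact hcinj i hi j hj
    have hCsub : Cs ⊆ S := by
      intro x hx
      rw [hCsdef, Finset.mem_image] at hx
      obtain ⟨m, _, hm⟩ := hx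
      rw [← hm]; exact hcS m
    have hsumC : ∑ s ∈ Cs, g s = ∑ m ∈ Finset.range q, g (c m) := by
      rw [hCsdef]
      apply Finset.sum_image
      intro i hi j hj
      rw [Finset.mem_coe, Finset.mem_range] at hi hj
      exact hcinj i hi j hj
    have hshift1 : ∑ m ∈ Finset.range q, g (c (m + 1)) = ∑ m ∈ Finset.range q, g (c m) := by
      exact shiftSum q (fun m => g (c m)) (fun m => by simp only [hcper]) 1
    have hcyc1 : q * (L + 1) ≤ w * n + ∑ s ∈ Cs, g s := by
      calc q * (L+1) = ∑ _m ∈ Finset.range q, (L+1) := by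
            rw [Finset.sum_const, Finset.card_range]; ring
      _ ≤ ∑ m ∈ Finset.range q, (d m + g (c (m+1))) :=
            Finset.sum_le_sum (fun m _ => hstep m)
      _ = (∑ m ∈ Finset.range q, d m) + ∑ m ∈ Finset.range q, g (c (m+1)) :=
            Finset.sum_add_distrib
      _ = w * n + ∑ s ∈ Cs, g s := by rw [hwn, hshift1, hsumC]
    have hsplit : ∑ s ∈ S \ Cs, g s + ∑ s ∈ Cs, g s = ∑ s ∈ S, g s :=
      Finset.sum_sdiff hCsub
    have hqr : q ≤ r := by
      rw [← hCcard, ← hcard]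
      exact Finset.card_le_card hCsub
    have hnoncyc : r - q ≤ ∑ s ∈ S \ Cs, g s := by
      have hcrd : (S \ Cs).card = r - q := by
        rw [Finset.card_sdiff_of_subset hCsub, hCcard, hcard]
      calc r - q = ∑ _s ∈ S \ Cs, 1 := by rw [Finset.sum_const, hcrd]; ring
      _ ≤ ∑ s ∈ S \ Cs, g s := Finset.sum_le_sum
            (fun s hs => hg1 s (Finset.mem_sdiff.mp hs).1)
    have hcyc : q * L + r ≤ w * n + n := by
      have hexp : q * (L + 1) = q * L + q := by ring
      omega
    -- windows of k-1 consecutive steps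
    set Wd : ℕ → ℕ := fun i => ∑ j ∈ Finset.range (k-1), d (i + j) with hWdef
    by_cases hwin : ∃ i < q, r ≤ Wd i
    · -- a long window : construct k starts with no common point
      obtain ⟨i, hiq, hWi⟩ := hwin
      obtain ⟨p, hp⟩ := hprop (fun j => c (i + j.val)) (fun j => hcS _)
      -- telescoping
      have hpA : ∀ t < k, (p - c (i + t)).val < r := by
        intro t ht
        exact hp ⟨t, ht⟩
      have htele : ∀ t, t < k → (p - c i).val
          = (p - c (i + t)).val + ∑ j ∈ Finset.range t, d (i + j) := by
        intro t
        induction t with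
        | zero => simp
        | succ t ih =>
            intro ht
            have h1 := ih (by omega)
            have hstep1 : (p - c (i + t)).val
                = (p - c (i + t + 1)).val + d (i + t) := by
              apply valSubAdd p (c (i + t + 1)) (c (i + t))
              have hv1 : (p - c (i + t + 1)).val < r := by
                have := hpA (t+1) ht
                rw [show i + (t+1) = i + t + 1 by ring] at this
                exact this
              have hv2 : (c (i + t + 1) - c (i + t)).val = d (i + t) := rfl
              have := hdL (i + t)
              omega
            rw [show i + (t+1) = i + t + 1 by ring, Finset.sum_range_succ]
            omega
      have hfin := htele (k-1) (by omega)
      have hA0 : (p - c i).val < r := by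
        have := hpA 0 (by omega)
        simpa using this
      have hWii : Wd i = ∑ j ∈ Finset.range (k-1), d (i + j) := rfl
      omega
    · -- all windows short : arithmetic contradiction
      push_neg at hwin
      have hsumW : ∑ i ∈ Finset.range q, Wd i = (k-1) * (w * n) := by
        calc ∑ i ∈ Finset.range q, Wd i
            = ∑ i ∈ Finset.range q, ∑ j ∈ Finset.range (k-1), d (i + j) := rfl
        _ = ∑ j ∈ Finset.range (k-1), ∑ i ∈ Finset.range q, d (i + j) :=
              Finset.sum_comm
        _ = ∑ _j ∈ Finset.range (k-1), (w * n) := by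
              refine Finset.sum_congr rfl (fun j _ => ?_)
              rw [shiftSum q d hdper j, hwn]
        _ = (k-1) * (w * n) := by
              rw [Finset.sum_const, Finset.card_range, smul_eq_mul]
      have hsumW_le : ∑ i ∈ Finset.range q, Wd i ≤ q * (r-1) := by
        calc ∑ i ∈ Finset.range q, Wd i ≤ ∑ _i ∈ Finset.range q, (r-1) :=
              Finset.sum_le_sum (fun i hi => by
                have := hwin i (Finset.mem_range.mp hi); omega)
        _ = q * (r-1) := by rw [Finset.sum_const, Finset.card_range]; ring
      -- q ≤ w * k
      have hqL_le : q * L ≤ w * n + L := by omega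
      set beta := k * L - n with hbetadef
      have hbkL : k * L = n + beta := by omega
      have hwkL : (w * k) * L = w * n + w * beta := by
        calc (w * k) * L = w * (k * L) := by ring
        _ = w * (n + beta) := by rw [hbkL]
        _ = w * n + w * beta := by ring
      have hwb1 : 1 ≤ w * beta := by
        have h1 : 1 ≤ beta := by omega
        exact Nat.one_le_iff_ne_zero.mpr (by positivity)
      have hqwk : q ≤ w * k := by
        have h3 : q * L < (w * k + 1) * L := by
          have : (w * k + 1) * L = (w * k) * L + L := by ring
          omega
        have := (Nat.mul_lt_mul_right (by omega : 0 < L)).mp h3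
        omega
      -- final contradiction
      have hA3 : (k-1) * (w * n) ≤ q * (r-1) := by omega
      have hA4 : (k-1) * (w * n) ≤ (w * k) * (r-1) :=
        le_trans hA3 (Nat.mul_le_mul_right _ hqwk)
      have hA5 : w * ((k-1) * n) ≤ w * (k * (r-1)) := by
        calc w * ((k-1) * n) = (k-1) * (w * n) := by ring
        _ ≤ (w * k) * (r-1) := hA4
        _ = w * (k * (r-1)) := by ring
      have hA6 : (k-1) * n ≤ k * (r-1) := Nat.le_of_mul_le_mul_left
        (by calc w * ((k-1)*n) ≤ w * (k * (r-1)) := hA5) (by omega)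
      have hkn : k * n = k * r + k * L := by rw [hL]; ring
      have hk1n : (k-1) * n + n = k * n := by
        have h1 : k - 1 + 1 = k := by omega
        calc (k-1) * n + n = ((k-1) + 1) * n := by ring
        _ = k * n := by rw [h1]
      have hkr1 : k * (r-1) + k = k * r := by
        have h1 : r - 1 + 1 = r := by omega
        calc k * (r-1) + k = k * ((r-1) + 1) := by ring
        _ = k * r := by rw [h1]
      omega

section basic
variable {n r : ℕ} [NeZero n] {σ : ZMod n → ℕ} (hinj : Function.Injective σ)

lemma mem_cInterval {v : ℕ} {x : ZMod n} :
    v ∈ cInterval n σ r x ↔ ∃ j < r, v = σ (x + (j : ℕ)) := by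
  simp [cInterval, eq_comm]

include hinj in
lemma sigma_mem_cInterval (hrn : r ≤ n) {p x : ZMod n} :
    σ p ∈ cInterval n σ r x ↔ (p - x).val < r := by
  constructor
  · rintro hv
    rw [mem_cInterval] at hv
    obtain ⟨j, hj, hv⟩ := hv
    have : p = x + (j : ℕ) := hinj hv
    have hsub : p - x = (j : ℕ) := by rw [this]; ring
    rw [hsub, ZMod.val_cast_of_lt (lt_of_lt_of_le hj hrn)]
    exact hj
  · intro hlt
    rw [mem_cInterval]
    refine ⟨(p - x).val, hlt, ?_⟩
    congr 1
    rw [ZMod.natCast_zmod_val]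
    ring

include hinj in
lemma cInterval_inj (hr : 0 < r) (hrn : r < n) :
    Function.Injective (cInterval n σ r) := by
  intro x y hxy
  have hx : σ x ∈ cInterval n σ r x := by
    rw [mem_cInterval]; exact ⟨0, hr, by simp⟩
  rw [hxy, sigma_mem_cInterval hinj hrn.le] at hx
  set j := (x - y).val with hjdef
  have hxj : x = y + (j : ℕ) := by
    rw [hjdef, ZMod.natCast_zmod_val]; ring
  rcases Nat.eq_zero_or_pos j with h0 | hpos
  · have : x - y = 0 := by rwa [← ZMod.val_eq_zero]
    exact sub_eq_zero.mp this
  · have hz : σ (y + ((j - 1 : ℕ) : ZMod n)) ∈ cInterval n σ r y := by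
      rw [mem_cInterval]
      exact ⟨j - 1, by omega, rfl⟩
    rw [← hxy, mem_cInterval] at hz
    obtain ⟨j', hj', hz⟩ := hz
    have heq : y + ((j - 1 : ℕ) : ZMod n) = x + (j' : ℕ) := hinj hz
    rw [hxj] at heq
    have heq2 : ((j - 1 : ℕ) : ZMod n) = ((j + j' : ℕ) : ZMod n) := by
      push_cast at heq ⊢
      linear_combination heq
    have hmod := (ZMod.natCast_eq_natCast_iff _ _ _).mp heq2
    have hdvd : n ∣ (j + j') - (j - 1) := (Nat.modEq_iff_dvd' (by omega)).mp hmod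
    have hjlt : j < r := hx
    have hd : (j + j') - (j - 1) = j' + 1 := by omega
    rw [hd] at hdvd
    have : n ≤ j' + 1 := Nat.le_of_dvd (by omega) hdvd
    omega

end basic

/-- Extremal case of Frankl's interval lemma: if `k·r < (k−1)·n` and a `k`-wise
intersecting family of `σ`-intervals of length `r` has exactly `r` members, then there
is an index `x ∈ ℤ/nℤ` such that `𝓕` consists precisely of all `σ`-intervals of length `r`
containing the index `x`. -/
theorem kwise_intervals_extremal (n r k : ℕ) (hn : 0 < n) (hr : 0 < r) (hk : 2 ≤ k)
    (hkr : k * r < (k - 1) * n)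
    (σ : ZMod n → ℕ) (hinj : Function.Injective σ)
    (hrange : ∀ i, σ i ∈ Finset.Icc 1 n)
    (𝓕 : Finset (Finset ℕ)) (h𝓕 : ∀ F ∈ 𝓕, ∃ x, F = cInterval n σ r x)
    (hint : KWiseIntersecting k 𝓕) (hcard : 𝓕.card = r) :
    ∃ x : ZMod n, ∀ F : Finset ℕ,
      F ∈ 𝓕 ↔ ∃ y : ZMod n, F = cInterval n σ r y ∧ ∃ j : ℕ, j < r ∧ y + (j : ZMod n) = x := by
  haveI : NeZero n := ⟨hn.ne'⟩
  -- basic numeric facts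
  have hk1 : (k - 1) * n + n = k * n := by
    have h1 : k - 1 + 1 = k := by omega
    calc (k-1) * n + n = ((k-1) + 1) * n := by ring
    _ = k * n := by rw [h1]
  have hrn : r < n := by
    by_contra hcon
    push_neg at hcon
    have h1 : k * n ≤ k * r := Nat.mul_le_mul_left _ hcon
    have h2 : (k - 1) * n ≤ (k - 1) * n := le_refl _
    omega
  set L := n - r with hLdef
  have hL : n = r + L := by omega
  have hL1 : 1 ≤ L := by omega
  have hβ : n + 1 ≤ k * L := by
    have e1 : k * n = k * r + k * L := by
      have : r + L = n := by omega
      calc k * n = k * (r + L) := by rw [this]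
      _ = k * r + k * L := by ring
    omega
  -- the start set
  set S : Finset (ZMod n) := Finset.univ.filter (fun x => cInterval n σ r x ∈ 𝓕) with hSdef
  have hmemS : ∀ x : ZMod n, x ∈ S ↔ cInterval n σ r x ∈ 𝓕 := by
    intro x
    rw [hSdef, Finset.mem_filter]
    simp
  have hSim : S.image (cInterval n σ r) = 𝓕 := by
    ext F
    rw [Finset.mem_image]
    constructor
    · rintro ⟨x, hx, rfl⟩
      exact (hmemS x).mp hx
    · intro hF
      obtain ⟨x, rfl⟩ := h𝓕 F hF
      exact ⟨x, (hmemS x).mpr hF, rfl⟩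
  have hScard : S.card = r := by
    have h1 : (S.image (cInterval n σ r)).card = S.card :=
      Finset.card_image_of_injective _ (cInterval_inj hinj hr hrn)
    rw [hSim, hcard] at h1
    omega
  -- the k-wise window property
  have hprop : ∀ f : Fin k → ZMod n, (∀ i, f i ∈ S) →
      ∃ p : ZMod n, ∀ i, (p - f i).val < r := by
    intro f hf
    obtain ⟨v, hv⟩ := hint (fun i => cInterval n σ r (f i))
      (fun i => (hmemS (f i)).mp (hf i))
    have h0 := hv ⟨0, by omega⟩
    rw [mem_cInterval] at h0
    obtain ⟨j, hj, hvj⟩ := h0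
    set p := f ⟨0, by omega⟩ + (j : ℕ) with hpdef
    refine ⟨p, fun i => ?_⟩
    have hvi := hv i
    rw [hvj] at hvi
    exact (sigma_mem_cInterval hinj hrn.le).mp hvi
  -- the core lemma
  obtain ⟨x, hx⟩ := coreLemma hr hk hL hL1 hβ S hScard hprop
  -- the star family
  set G : Finset (Finset ℕ) :=
    (Finset.range r).image (fun j : ℕ => cInterval n σ r (x - (j : ℕ))) with hGdef
  have hGcard : G.card = r := by
    rw [hGdef, Finset.card_image_of_injOn, Finset.card_range]
    intro j hj j' hj' heq
    rw [Finset.mem_coe, Finset.mem_range] at hj hj'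
    have h1 : x - (j : ℕ) = x - (j' : ℕ) := cInterval_inj hinj hr hrn heq
    have h2 : ((j : ℕ) : ZMod n) = ((j' : ℕ) : ZMod n) := by
      linear_combination - h1
    have h3 := congrArg ZMod.val h2
    rw [ZMod.val_cast_of_lt (by omega), ZMod.val_cast_of_lt (by omega)] at h3
    exact h3
  have hsub : 𝓕 ⊆ G := by
    intro F hF
    obtain ⟨y, rfl⟩ := h𝓕 F hF
    have hyS : y ∈ S := (hmemS y).mpr hF
    have hyx := hx y hyS
    rw [hGdef, Finset.mem_image]
    refine ⟨(x - y).val, Finset.mem_range.mpr hyx, ?_⟩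
    congr 1
    rw [ZMod.natCast_zmod_val]
    ring
  have heq : 𝓕 = G := Finset.eq_of_subset_of_card_le hsub (by omega)
  refine ⟨x, fun F => ⟨?_, ?_⟩⟩
  · intro hF
    rw [heq, hGdef, Finset.mem_image] at hF
    obtain ⟨j, hj, hFj⟩ := hF
    rw [Finset.mem_range] at hj
    exact ⟨x - (j : ℕ), hFj.symm, j, hj, by ring⟩
  · rintro ⟨y, rfl, j, hjr, hyj⟩
    rw [heq, hGdef, Finset.mem_image]
    refine ⟨j, Finset.mem_range.mpr hjr, ?_⟩
    congr 1
    linear_combination -hyj
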